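/- Let k ∈ ℂ, q, ψᵣ, ψᵢ as in the previous setting (∂̄ψᵣ + q·e(z,−k)·conj(ψᵣ) = 0, ∂̄ψᵢ − q·e(z,−k)·conj(ψᵢ) = 0), and define m₂ = ½·e(z,−k)·(conj(ψᵢ) − conj(ψᵣ)). Then (∂ + ik)m₂ = conj(q)·m₁ pointwise, where m₁ = ½(ψᵣ + ψᵢ) and ∂ = ½(∂ₓ − i∂_y). -/

import Mathlib

open Complex MeasureTheory Filter

/-- The Cauchy-Riemann operator ∂̄ = ½(∂ₓ + i∂_y) acting on real-differentiable f : ℂ → ℂ. -/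
noncomputable def dbar (f : ℂ → ℂ) (z : ℂ) : ℂ :=
  (fderiv ℝ f z 1 + Complex.I * fderiv ℝ f z Complex.I) / 2

/-- The operator ∂ = ½(∂ₓ − i∂_y). -/
noncomputable def del (f : ℂ → ℂ) (z : ℂ) : ℂ :=
  (fderiv ℝ f z 1 - Complex.I * fderiv ℝ f z Complex.I) / 2

/-- e(z,k) = exp(i(zk + conj(z)conj(k))). -/
noncomputable def eZK (z k : ℂ) : ℂ :=
  Complex.exp (Complex.I * (z * k + (starRingEnd ℂ) z * (starRingEnd ℂ) k))

theorem stmt15 (k : ℂ) (q ψr ψi : ℂ → ℂ)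
    (hψr : Differentiable ℝ ψr) (hψi : Differentiable ℝ ψi)
    (heqr : ∀ z, dbar ψr z + q z * eZK z (-k) * (starRingEnd ℂ) (ψr z) = 0)
    (heqi : ∀ z, dbar ψi z - q z * eZK z (-k) * (starRingEnd ℂ) (ψi z) = 0)
    (m₁ m₂ : ℂ → ℂ)
    (hm₁ : ∀ z, m₁ z = (ψr z + ψi z) / 2)
    (hm₂ : ∀ z, m₂ z = eZK z (-k) * ((starRingEnd ℂ) (ψi z) - (starRingEnd ℂ) (ψr z)) / 2) :
    ∀ z, del m₂ z + Complex.I * k * m₂ z = (starRingEnd ℂ) (q z) * m₁ z := by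
  intro z
  have hm₂' : m₂ = fun w => eZK w (-k) *
      ((starRingEnd ℂ) (ψi w) - (starRingEnd ℂ) (ψr w)) / 2 := funext hm₂
  subst hm₂'
  set C : ℂ →L[ℝ] ℂ := Complex.conjCLE.toContinuousLinearMap with hC
  set L : ℂ →L[ℝ] ℂ :=
    (Complex.I * (-k)) • ContinuousLinearMap.id ℝ ℂ + (Complex.I * (starRingEnd ℂ) (-k)) • C
    with hLdef
  have hLapp : ∀ v : ℂ, L v = Complex.I * (v * (-k) + (starRingEnd ℂ) v * (starRingEnd ℂ) (-k)) := by
    intro v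
    simp [hLdef, hC, ContinuousLinearMap.smul_apply, Complex.conjCLE_apply]
    ring
  have hφ : HasFDerivAt
      (fun w => Complex.I * (w * (-k) + (starRingEnd ℂ) w * (starRingEnd ℂ) (-k))) L z := by
    have h : (fun w => Complex.I * (w * (-k) + (starRingEnd ℂ) w * (starRingEnd ℂ) (-k))) = ⇑L :=
      funext fun v => (hLapp v).symm
    rw [h]
    exact L.hasFDerivAt
  have hg : HasFDerivAt (fun w => eZK w (-k)) (eZK z (-k) • L) z := by
    have := hφ.cexp
    simpa [eZK] using this
  have hhi : HasFDerivAt (fun w => (starRingEnd ℂ) (ψi w)) (C.comp (fderiv ℝ ψi z)) z := by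
    have := C.hasFDerivAt.comp z (hψi z).hasFDerivAt
    exact this
  have hhr : HasFDerivAt (fun w => (starRingEnd ℂ) (ψr w)) (C.comp (fderiv ℝ ψr z)) z := by
    have := C.hasFDerivAt.comp z (hψr z).hasFDerivAt
    exact this
  have hfun : (fun w => eZK w (-k) * ((starRingEnd ℂ) (ψi w) - (starRingEnd ℂ) (ψr w)) / 2)
      = fun w => (2:ℂ)⁻¹ * (eZK w (-k) * ((starRingEnd ℂ) (ψi w) - (starRingEnd ℂ) (ψr w))) :=
    funext fun w => by ring
  have hF : HasFDerivAt
      (fun w => (2:ℂ)⁻¹ * (eZK w (-k) * ((starRingEnd ℂ) (ψi w) - (starRingEnd ℂ) (ψr w))))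
      ((2:ℂ)⁻¹ • ((eZK z (-k)) • (C.comp (fderiv ℝ ψi z) - C.comp (fderiv ℝ ψr z)) +
        ((starRingEnd ℂ) (ψi z) - (starRingEnd ℂ) (ψr z)) • (eZK z (-k) • L))) z :=
    (hg.mul (hhi.sub hhr)).const_mul _
  set g := eZK z (-k) with hgdef
  set a1 := fderiv ℝ ψi z 1 with ha1
  set aI := fderiv ℝ ψi z Complex.I with haI
  set b1 := fderiv ℝ ψr z 1 with hb1
  set bI := fderiv ℝ ψr z Complex.I with hbI
  have hA : a1 + Complex.I * aI = 2 * (q z * g * (starRingEnd ℂ) (ψi z)) := by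
    have h := heqi z
    rw [dbar] at h
    linear_combination 2 * h
  have hB : b1 + Complex.I * bI = -(2 * (q z * g * (starRingEnd ℂ) (ψr z))) := by
    have h := heqr z
    rw [dbar] at h
    linear_combination 2 * h
  have hA' : (starRingEnd ℂ) a1 - Complex.I * (starRingEnd ℂ) aI
      = 2 * ((starRingEnd ℂ) (q z) * (starRingEnd ℂ) g * ψi z) := by
    have h := congrArg (starRingEnd ℂ) hA
    simp only [map_add, map_mul, map_ofNat, Complex.conj_I, Complex.conj_conj] at h
    linear_combination h
  have hB' : (starRingEnd ℂ) b1 - Complex.I * (starRingEnd ℂ) bI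
      = -(2 * ((starRingEnd ℂ) (q z) * (starRingEnd ℂ) g * ψr z)) := by
    have h := congrArg (starRingEnd ℂ) hB
    simp only [map_add, map_mul, map_neg, map_ofNat, Complex.conj_I, Complex.conj_conj] at h
    linear_combination h
  have hgg : g * (starRingEnd ℂ) g = 1 := by
    rw [hgdef, eZK, ← Complex.exp_conj, ← Complex.exp_add]
    rw [show Complex.I * (z * -k + (starRingEnd ℂ) z * (starRingEnd ℂ) (-k)) +
        (starRingEnd ℂ) (Complex.I * (z * -k + (starRingEnd ℂ) z * (starRingEnd ℂ) (-k))) = 0 by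
      simp only [map_mul, map_add, map_neg, Complex.conj_I, Complex.conj_conj]
      ring]
    exact Complex.exp_zero
  rw [del, hfun, hF.fderiv, hm₁ z]
  simp only [ContinuousLinearMap.smul_apply]
  simp only [ContinuousLinearMap.coe_smul', ContinuousLinearMap.add_apply,
    ContinuousLinearMap.smul_apply, ContinuousLinearMap.sub_apply,
    ContinuousLinearMap.comp_apply, ContinuousLinearMap.coe_sub',
    Pi.smul_apply, Pi.sub_apply, smul_eq_mul, hC,
    ContinuousLinearEquiv.coe_coe, Complex.conjCLE_apply, hLapp,
    ← ha1, ← haI, ← hb1, ← hbI,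
    map_neg, map_one, Complex.conj_I, Complex.conj_conj]
  field_simp
  rw [← hgdef]
  linear_combination g * hA' - g * hB' +
    (2 * (starRingEnd ℂ) (q z) * (ψi z + ψr z)) * hgg +
    (g * ((starRingEnd ℂ) (ψi z) - (starRingEnd ℂ) (ψr z)) * Complex.I *
      (k - (starRingEnd ℂ) k)) * Complex.I_sq
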